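/- arXiv:1807.07802 — 3 statements merged into one kernel-verified Lean document; each statement's English description precedes it below -/
import Mathlib

section
/- Let 1 → G₁ → G₂ → G₃ → 1 be a short exact sequence of groups. If G₁ and G₃ are both slender and coherent, then G₂ is slender and coherent. -/
open Subgroup

def Group.Slender (G : Type*) [Group G] : Prop := ∀ H : Subgroup G, H.FG

def Group.FinitelyPresented (G : Type*) [Group G] : Prop :=
  ∃ (n : ℕ) (rels : Set (FreeGroup (Fin n))), rels.Finite ∧ Nonempty (PresentedGroup rels ≃* G)

def Group.Coherent (G : Type*) [Group G] : Prop :=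
  ∀ H : Subgroup G, H.FG → Group.FinitelyPresented H

lemma fp_of_presentation {G : Type*} [Group G] {α : Type*} (k : ℕ) (e : α ≃ Fin k)
    (f : FreeGroup α →* G) (T : Set (FreeGroup α)) (hT : T.Finite)
    (hsurj : Function.Surjective f) (hker : f.ker = Subgroup.normalClosure T) :
    Group.FinitelyPresented G := by
  classical
  let c : FreeGroup α ≃* FreeGroup (Fin k) := FreeGroup.freeGroupCongr e
  let f' : FreeGroup (Fin k) →* G := f.comp c.symm.toMonoidHom
  have hsurj' : Function.Surjective f' := hsurj.comp c.symm.surjective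
  have hker' : f'.ker = Subgroup.normalClosure (⇑c '' T) := by
    have h1 : f'.ker = (f.ker).comap c.symm.toMonoidHom := rfl
    have h2 : (Subgroup.normalClosure T).comap c.symm.toMonoidHom
        = (Subgroup.normalClosure T).map (c : FreeGroup α →* FreeGroup (Fin k)) := by
      ext x
      simp only [Subgroup.mem_comap, MulEquiv.coe_toMonoidHom]
      exact Subgroup.mem_map_equiv.symm
    rw [h1, hker, h2]
    exact map_normalClosure _ _ c.surjective
  exact ⟨k, ⇑c '' T, hT.image _,
    ⟨(QuotientGroup.quotientMulEquivOfEq hker'.symm).trans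
      (QuotientGroup.quotientKerEquivOfSurjective f' hsurj')⟩⟩

lemma presentation_of_fp {G : Type*} [Group G] (h : Group.FinitelyPresented G) :
    ∃ (n : ℕ) (f : FreeGroup (Fin n) →* G) (T : Set (FreeGroup (Fin n))),
      T.Finite ∧ Function.Surjective f ∧ f.ker = Subgroup.normalClosure T := by
  obtain ⟨n, rels, hfin, ⟨e⟩⟩ := h
  refine ⟨n, e.toMonoidHom.comp (QuotientGroup.mk' _), rels, hfin,
    e.surjective.comp (QuotientGroup.mk'_surjective _), ?_⟩
  ext x
  rw [MonoidHom.mem_ker]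
  show e (PresentedGroup.mk rels x) = 1 ↔ _
  rw [EmbeddingLike.map_eq_one_iff]
  exact PresentedGroup.mk_eq_one_iff

lemma fp_of_exact {N H Q : Type*} [Group N] [Group H] [Group Q]
    (ι : N →* H) (π : H →* Q) (hι : Function.Injective ι) (hπ : Function.Surjective π)
    (hexact : π.ker = ι.range) (hN : Group.FinitelyPresented N)
    (hQ : Group.FinitelyPresented Q) : Group.FinitelyPresented H := by
  classical
  obtain ⟨n, fN, s, hs, hfN, hkerN⟩ := presentation_of_fp hN
  obtain ⟨m, fQ, r, hr, hfQ, hkerQ⟩ := presentation_of_fp hQ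
  set σ : Q → H := Function.surjInv hπ with hσdef
  have hσ : ∀ q, π (σ q) = q := Function.surjInv_eq hπ
  set jN : FreeGroup (Fin n) →* FreeGroup (Fin n ⊕ Fin m) := FreeGroup.map Sum.inl with hjN
  set jM : FreeGroup (Fin m) →* FreeGroup (Fin n ⊕ Fin m) := FreeGroup.map Sum.inr with hjM
  set φ : FreeGroup (Fin n ⊕ Fin m) →* H :=
    FreeGroup.lift (Sum.elim (fun i => ι (fN (FreeGroup.of i)))
      (fun j => σ (fQ (FreeGroup.of j)))) with hφdef
  set pr : FreeGroup (Fin n ⊕ Fin m) →* FreeGroup (Fin m) :=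
    FreeGroup.lift (Sum.elim (fun _ => (1 : FreeGroup (Fin m))) FreeGroup.of) with hprdef
  have hφN : ∀ u, φ (jN u) = ι (fN u) := by
    intro u
    have h : φ.comp jN = ι.comp fN := FreeGroup.ext_hom _ _ (fun i => by
      simp [hφdef, hjN, FreeGroup.map.of, FreeGroup.lift_apply_of])
    exact DFunLike.congr_fun h u
  have hιker : ∀ a : N, ι a ∈ π.ker := by
    intro a; rw [hexact]; exact ⟨a, rfl⟩
  have hπφ : ∀ z, π (φ z) = fQ (pr z) := by
    intro z
    have h : π.comp φ = fQ.comp pr := FreeGroup.ext_hom _ _ (fun x => by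
      rcases x with i | j
      · simpa [hφdef, hprdef, FreeGroup.lift_apply_of] using hιker (fN (FreeGroup.of i))
      · simp [hφdef, hprdef, FreeGroup.lift_apply_of, hσ])
    exact DFunLike.congr_fun h z
  have hprM : ∀ w, pr (jM w) = w := by
    intro w
    have h : pr.comp jM = MonoidHom.id _ := FreeGroup.ext_hom _ _ (fun j => by
      simp [hprdef, hjM, FreeGroup.map.of, FreeGroup.lift_apply_of])
    exact DFunLike.congr_fun h w
  -- choose preimage words for elements of ker π
  have key : ∀ h : H, ∃ u : FreeGroup (Fin n), h ∈ π.ker → ι (fN u) = h := by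
    intro h
    by_cases hh : h ∈ π.ker
    · rw [hexact] at hh
      obtain ⟨a, ha⟩ := hh
      obtain ⟨u, hu⟩ := hfN a
      exact ⟨u, fun _ => by rw [hu, ha]⟩
    · exact ⟨1, fun h' => absurd h' hh⟩
  choose lft hlft using key
  -- relator sets
  set cw : Fin n × Fin m × Bool → FreeGroup (Fin n ⊕ Fin m) := fun p =>
    (if p.2.2 then FreeGroup.of (Sum.inr p.2.1) else (FreeGroup.of (Sum.inr p.2.1))⁻¹) *
      FreeGroup.of (Sum.inl p.1) *
      (if p.2.2 then FreeGroup.of (Sum.inr p.2.1) else (FreeGroup.of (Sum.inr p.2.1))⁻¹)⁻¹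
    with hcw
  set R : Set (FreeGroup (Fin n ⊕ Fin m)) :=
    (jN '' s) ∪ ((fun ρ => jM ρ * (jN (lft (φ (jM ρ))))⁻¹) '' r) ∪
      (Set.range fun p => cw p * (jN (lft (φ (cw p))))⁻¹) with hR
  have hRfin : R.Finite := ((hs.image _).union (hr.image _)).union (Set.finite_range _)
  have hφcw : ∀ p, φ (cw p) ∈ π.ker := by
    intro p
    rw [MonoidHom.mem_ker, hπφ]
    rcases p with ⟨i, j, b⟩
    cases b <;> simp [hcw, hprdef, FreeGroup.lift_apply_of]
  have hφjM : ∀ ρ ∈ r, φ (jM ρ) ∈ π.ker := by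
    intro ρ hρ
    rw [MonoidHom.mem_ker, hπφ, hprM]
    have : ρ ∈ fQ.ker := hkerQ ▸ Subgroup.subset_normalClosure hρ
    exact this
  have hRker : Subgroup.normalClosure R ≤ φ.ker := by
    apply Subgroup.normalClosure_le_normal
    rintro x ((⟨u, hu, rfl⟩ | ⟨ρ, hρ, rfl⟩) | ⟨p, rfl⟩)
    · have : u ∈ fN.ker := hkerN ▸ Subgroup.subset_normalClosure hu
      simp only [SetLike.mem_coe, MonoidHom.mem_ker, hφN]
      rw [MonoidHom.mem_ker] at this
      rw [this, map_one]
    · simp only [SetLike.mem_coe, MonoidHom.mem_ker, map_mul, map_inv, hφN]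
      rw [hlft _ (hφjM ρ hρ), mul_inv_cancel]
    · simp only [SetLike.mem_coe, MonoidHom.mem_ker, map_mul, map_inv, hφN]
      rw [hlft _ (hφcw p), mul_inv_cancel]
  -- surjectivity of φ
  have hφsurj : Function.Surjective φ := by
    intro h
    obtain ⟨w, hw⟩ := hfQ (π h)
    have h1 : π (h * (φ (jM w))⁻¹) = 1 := by
      rw [map_mul, map_inv, hπφ, hprM, hw, mul_inv_cancel]
    have h2 : h * (φ (jM w))⁻¹ ∈ π.ker := h1
    use jN (lft (h * (φ (jM w))⁻¹)) * jM w
    rw [map_mul, hφN, hlft _ h2, inv_mul_cancel_right]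
  -- the quotient
  set mk : FreeGroup (Fin n ⊕ Fin m) →* FreeGroup (Fin n ⊕ Fin m) ⧸ Subgroup.normalClosure R :=
    QuotientGroup.mk' (Subgroup.normalClosure R) with hmk
  have hmksurj : Function.Surjective mk := QuotientGroup.mk'_surjective _
  set φ' : (FreeGroup (Fin n ⊕ Fin m) ⧸ Subgroup.normalClosure R) →* H :=
    QuotientGroup.lift (Subgroup.normalClosure R) φ hRker with hφ'
  have hφ'mk : ∀ z, φ' (mk z) = φ z := fun z => rfl
  -- the subgroup K
  have hkerle : fN.ker ≤ (mk.comp jN).ker := by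
    rw [hkerN]
    intro u hu
    have : jN u ∈ Subgroup.normalClosure R := by
      have h1 : Subgroup.normalClosure s ≤
          (Subgroup.normalClosure R).comap jN := by
        apply Subgroup.normalClosure_le_normal
        intro x hx
        exact Subgroup.subset_normalClosure (Or.inl (Or.inl ⟨x, hx, rfl⟩))
      exact h1 hu
    rw [MonoidHom.mem_ker, MonoidHom.comp_apply, hmk, QuotientGroup.mk'_apply,
      QuotientGroup.eq_one_iff]
    exact this
  set eN := QuotientGroup.quotientKerEquivOfSurjective fN hfN with heN
  set ψ : N →* (FreeGroup (Fin n ⊕ Fin m) ⧸ Subgroup.normalClosure R) :=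
    (QuotientGroup.lift fN.ker (mk.comp jN) hkerle).comp eN.symm.toMonoidHom with hψdef
  have hψ : ∀ u, ψ (fN u) = mk (jN u) := by
    intro u
    have h1 : eN.symm (fN u) = QuotientGroup.mk u := by
      apply eN.injective
      rw [MulEquiv.apply_symm_apply]
      rfl
    rw [hψdef, MonoidHom.comp_apply, MulEquiv.coe_toMonoidHom, h1]
    rfl
  set K : Subgroup (FreeGroup (Fin n ⊕ Fin m) ⧸ Subgroup.normalClosure R) := ψ.range with hK
  have hφ'ψ : ∀ a, φ' (ψ a) = ι a := by
    intro a
    obtain ⟨u, rfl⟩ := hfN a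
    rw [hψ, hφ'mk, hφN]
  have hKinj : ∀ p ∈ K, φ' p = 1 → p = 1 := by
    rintro p ⟨a, rfl⟩ hp
    rw [hφ'ψ] at hp
    have : a = 1 := hι (by rw [hp, map_one])
    rw [this, map_one]
  have hmem_K : ∀ u, mk (jN u) ∈ K := fun u => ⟨fN u, hψ u⟩
  have hgenK : ∀ i : Fin n, mk (FreeGroup.of (Sum.inl i)) ∈ K := by
    intro i
    have : jN (FreeGroup.of i) = FreeGroup.of (Sum.inl i) := by
      simp [hjN, FreeGroup.map.of]
    rw [← this]; exact hmem_K _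
  -- K as a closure
  have hKcl : K = Subgroup.closure (Set.range fun i : Fin n => mk (FreeGroup.of (Sum.inl i))) := by
    have h1 : K = (mk.comp jN).range := by
      apply le_antisymm
      · rintro _ ⟨a, rfl⟩
        obtain ⟨u, rfl⟩ := hfN a
        exact ⟨u, (hψ u).symm⟩
      · rintro _ ⟨u, rfl⟩
        exact ⟨fN u, hψ u⟩
    have h2 : mk.comp jN = FreeGroup.lift (fun i => mk (FreeGroup.of (Sum.inl i))) :=
      FreeGroup.ext_hom _ _ (fun i => by simp [hjN, FreeGroup.map.of])
    rw [h1, h2, FreeGroup.range_lift_eq_closure]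
  -- conjugation closure lemma
  have conj_mem : ∀ g : FreeGroup (Fin n ⊕ Fin m) ⧸ Subgroup.normalClosure R,
      (∀ i : Fin n, g * mk (FreeGroup.of (Sum.inl i)) * g⁻¹ ∈ K) →
      ∀ k ∈ K, g * k * g⁻¹ ∈ K := by
    intro g hg k hk
    have hle : Subgroup.closure (Set.range fun i : Fin n => mk (FreeGroup.of (Sum.inl i)))
        ≤ K.comap (MulAut.conj g).toMonoidHom := by
      rw [Subgroup.closure_le]
      rintro _ ⟨i, rfl⟩
      simpa [Subgroup.mem_comap, MulAut.conj_apply] using hg i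
    have h3 : k ∈ Subgroup.closure (Set.range fun i : Fin n => mk (FreeGroup.of (Sum.inl i))) := by
      rwa [← hKcl]
    simpa [Subgroup.mem_comap, MulAut.conj_apply] using hle h3
  -- conjugation of generators of K by generators of the ambient group
  have hconjgen : ∀ (x : Fin n ⊕ Fin m) (b : Bool) (i : Fin n),
      (if b then mk (FreeGroup.of x) else (mk (FreeGroup.of x))⁻¹) *
        mk (FreeGroup.of (Sum.inl i)) *
        ((if b then mk (FreeGroup.of x) else (mk (FreeGroup.of x))⁻¹))⁻¹ ∈ K := by
    rintro (i' | j) b i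
    · have h1 := hgenK i'
      have h2 := hgenK i
      cases b <;> simp only [if_true, if_false, Bool.false_eq_true] <;>
        exact mul_mem (mul_mem (by first | exact h1 | exact inv_mem h1) h2)
          (by first | exact inv_mem h1 | exact inv_mem (inv_mem h1))
    · have hrel : mk (cw (i, j, b) * (jN (lft (φ (cw (i, j, b)))))⁻¹) = 1 := by
        rw [hmk, QuotientGroup.mk'_apply, QuotientGroup.eq_one_iff]
        exact Subgroup.subset_normalClosure (Or.inr ⟨(i, j, b), rfl⟩)
      have heq : mk (cw (i, j, b)) = mk (jN (lft (φ (cw (i, j, b))))) := by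
        rw [map_mul, map_inv] at hrel
        exact mul_inv_eq_one.mp hrel
      have hmemcw : mk (cw (i, j, b)) ∈ K := heq ▸ hmem_K _
      cases b <;>
        simpa only [hcw, if_true, if_false, Bool.false_eq_true, map_mul, map_inv]
          using hmemcw
  have hgennorm : ∀ x : Fin n ⊕ Fin m, mk (FreeGroup.of x) ∈ Subgroup.normalizer (K : Set _) := by
    intro x
    rw [Subgroup.mem_normalizer_iff]
    intro k
    constructor
    · intro hk
      exact conj_mem _ (fun i => by simpa using hconjgen x true i) k hk
    · intro hk
      have h4 := conj_mem (mk (FreeGroup.of x))⁻¹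
        (fun i => by simpa using hconjgen x false i) _ hk
      have h5 : (mk (FreeGroup.of x))⁻¹ * (mk (FreeGroup.of x) * k * (mk (FreeGroup.of x))⁻¹) *
          ((mk (FreeGroup.of x))⁻¹)⁻¹ = k := by group
      rwa [h5] at h4
  have hKnormal : K.Normal := by
    rw [← Subgroup.normalizer_eq_top_iff]
    apply top_unique
    have htop : Subgroup.closure (Set.range fun x : Fin n ⊕ Fin m => mk (FreeGroup.of x)) = ⊤ := by
      have h6 : (Set.range fun x : Fin n ⊕ Fin m => mk (FreeGroup.of x))
          = ⇑mk '' (Set.range FreeGroup.of) := by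
        rw [← Set.range_comp]; rfl
      rw [h6, ← MonoidHom.map_closure, FreeGroup.closure_range_of, ← MonoidHom.range_eq_map,
        MonoidHom.range_eq_top_of_surjective _ hmksurj]
    rw [← htop, Subgroup.closure_le]
    rintro _ ⟨x, rfl⟩
    exact hgennorm x
  -- kernel of π ∘ φ' is K
  haveI := hKnormal
  have hmemKjM : ∀ ρ ∈ r, mk (jM ρ) ∈ K := by
    intro ρ hρ
    have hrel : mk (jM ρ * (jN (lft (φ (jM ρ))))⁻¹) = 1 := by
      rw [hmk, QuotientGroup.mk'_apply, QuotientGroup.eq_one_iff]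
      exact Subgroup.subset_normalClosure (Or.inl (Or.inr ⟨ρ, hρ, rfl⟩))
    have heq : mk (jM ρ) = mk (jN (lft (φ (jM ρ)))) := by
      rw [map_mul, map_inv] at hrel
      exact mul_inv_eq_one.mp hrel
    exact heq ▸ hmem_K _
  have hkerK : (π.comp φ').ker ≤ K := by
    set θ0 : FreeGroup (Fin m) →* _ := (QuotientGroup.mk' K).comp (mk.comp jM) with hθ0def
    have hθ0ker : fQ.ker ≤ θ0.ker := by
      rw [hkerQ]
      apply Subgroup.normalClosure_le_normal
      intro ρ hρ
      have : θ0 ρ = 1 := by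
        rw [hθ0def, MonoidHom.comp_apply, MonoidHom.comp_apply, QuotientGroup.mk'_apply,
          QuotientGroup.eq_one_iff]
        exact hmemKjM ρ hρ
      exact this
    set eQ := QuotientGroup.quotientKerEquivOfSurjective fQ hfQ with heQ
    set θ : Q →* _ := (QuotientGroup.lift fQ.ker θ0 hθ0ker).comp eQ.symm.toMonoidHom with hθdef
    have hθ : ∀ w, θ (fQ w) = θ0 w := by
      intro w
      have h1 : eQ.symm (fQ w) = QuotientGroup.mk w := by
        apply eQ.injective
        rw [MulEquiv.apply_symm_apply]
        rfl
      rw [hθdef, MonoidHom.comp_apply, MulEquiv.coe_toMonoidHom, h1]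
      rfl
    have hcomm : θ.comp (π.comp φ') = QuotientGroup.mk' K := by
      rw [← MonoidHom.cancel_right hmksurj]
      apply FreeGroup.ext_hom
      rintro (i | j)
      · have hL : φ' (mk (FreeGroup.of (Sum.inl i))) = ι (fN (FreeGroup.of i)) := by
          rw [hφ'mk, hφdef]
          simp [FreeGroup.lift_apply_of]
        simp only [MonoidHom.comp_apply]
        rw [hL]
        have h2 : π (ι (fN (FreeGroup.of i))) = 1 := hιker _
        rw [h2, map_one, QuotientGroup.mk'_apply]
        exact ((QuotientGroup.eq_one_iff _).mpr (hgenK i)).symm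
      · have hL : φ' (mk (FreeGroup.of (Sum.inr j))) = σ (fQ (FreeGroup.of j)) := by
          rw [hφ'mk, hφdef]
          simp [FreeGroup.lift_apply_of]
        simp only [MonoidHom.comp_apply]
        rw [hL, hσ]
        rw [hθ, hθ0def]
        simp only [MonoidHom.comp_apply]
        rw [show jM (FreeGroup.of j) = FreeGroup.of (Sum.inr j) from by
          rw [hjM]; exact FreeGroup.map.of]
    intro p hp
    rw [MonoidHom.mem_ker] at hp
    have h3 : QuotientGroup.mk' K p = 1 := by
      rw [← hcomm, MonoidHom.comp_apply, hp, map_one]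
    rwa [QuotientGroup.mk'_apply, QuotientGroup.eq_one_iff] at h3
  -- φ' is injective
  have hφ'inj : Function.Injective φ' := by
    rw [injective_iff_map_eq_one]
    intro p hp
    have h1 : p ∈ (π.comp φ').ker := by
      rw [MonoidHom.mem_ker, MonoidHom.comp_apply, hp, map_one]
    exact hKinj p (hkerK h1) hp
  -- kernel of φ equals normal closure of R
  have hkerφ : φ.ker = Subgroup.normalClosure R := by
    apply le_antisymm _ hRker
    intro z hz
    have : mk z = 1 := by
      apply hφ'inj
      rw [hφ'mk, map_one]
      exact hz
    rwa [hmk, QuotientGroup.mk'_apply, QuotientGroup.eq_one_iff] at this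
  exact fp_of_presentation (n + m) finSumFinEquiv φ R hRfin hφsurj hkerφ


/-- Given a short exact sequence `1 → G₁ → G₂ → G₃ → 1` of groups, if `G₁`
and `G₃` are slender and coherent, then so is `G₂`. -/
theorem slender_and_coherent_of_shortExact
    {G₁ G₂ G₃ : Type} [Group G₁] [Group G₂] [Group G₃]
    (ι : G₁ →* G₂) (π : G₂ →* G₃)
    (hι : Function.Injective ι) (hπ : Function.Surjective π)
    (hexact : π.ker = ι.range)
    (h₁ : Group.Slender G₁ ∧ Group.Coherent G₁)
    (h₃ : Group.Slender G₃ ∧ Group.Coherent G₃) :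
    Group.Slender G₂ ∧ Group.Coherent G₂ := by
  classical
  constructor
  · -- slender
    intro H
    obtain ⟨S₁, hS₁cl, hS₁fin⟩ := (Subgroup.fg_iff _).mp (h₁.1 (H.comap ι))
    obtain ⟨S₃, hS₃cl, hS₃fin⟩ := (Subgroup.fg_iff _).mp (h₃.1 (H.map π))
    have hS₃sub : S₃ ⊆ ↑(H.map π) := hS₃cl ▸ Subgroup.subset_closure
    have hex : ∀ q ∈ S₃, ∃ h, h ∈ H ∧ π h = q := by
      intro q hq
      obtain ⟨h, hh, rfl⟩ := hS₃sub hq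
      exact ⟨h, hh, rfl⟩
    choose! τ hτH hτπ using hex
    rw [Subgroup.fg_iff]
    refine ⟨⇑ι '' S₁ ∪ τ '' S₃, ?_, (hS₁fin.image _).union (hS₃fin.image _)⟩
    apply le_antisymm
    · rw [Subgroup.closure_le]
      rintro _ (⟨a, ha, rfl⟩ | ⟨q, hq, rfl⟩)
      · exact (hS₁cl ▸ Subgroup.subset_closure ha : a ∈ H.comap ι)
      · exact hτH q hq
    · intro h hh
      have himg : ⇑π '' (τ '' S₃) = S₃ := by
        ext q
        constructor
        · rintro ⟨_, ⟨q', hq', rfl⟩, rfl⟩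
          rwa [hτπ q' hq']
        · intro hq
          exact ⟨τ q, ⟨q, hq, rfl⟩, hτπ q hq⟩
      have h1 : π h ∈ Subgroup.map π (Subgroup.closure (τ '' S₃)) := by
        rw [MonoidHom.map_closure, himg, hS₃cl]
        exact ⟨h, hh, rfl⟩
      obtain ⟨k, hk, hkeq⟩ := h1
      have hkH : k ∈ H := by
        have hle : Subgroup.closure (τ '' S₃) ≤ H := by
          rw [Subgroup.closure_le]
          rintro _ ⟨q, hq, rfl⟩
          exact hτH q hq
        exact hle hk
      have h2 : h * k⁻¹ ∈ π.ker := by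
        rw [MonoidHom.mem_ker, map_mul, map_inv, hkeq, mul_inv_cancel]
      rw [hexact] at h2
      obtain ⟨a, ha⟩ := h2
      have haH : a ∈ Subgroup.closure S₁ := by
        rw [hS₁cl, Subgroup.mem_comap, ha]
        exact mul_mem hh (inv_mem hkH)
      have h3 : ι a ∈ Subgroup.closure (⇑ι '' S₁ ∪ τ '' S₃) := by
        apply Subgroup.closure_mono Set.subset_union_left
        rw [← MonoidHom.map_closure]
        exact ⟨a, haH, rfl⟩
      have h4 : k ∈ Subgroup.closure (⇑ι '' S₁ ∪ τ '' S₃) :=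
        Subgroup.closure_mono Set.subset_union_right hk
      have h5 : h = ι a * k := by rw [ha]; group
      rw [h5]
      exact mul_mem h3 h4
  · -- coherent
    intro H _
    have hFP₁ : Group.FinitelyPresented ↥(H.comap ι) := h₁.2 _ (h₁.1 _)
    have hFP₃ : Group.FinitelyPresented ↥(H.map π) := h₃.2 _ (h₃.1 _)
    refine fp_of_exact (N := ↥(H.comap ι)) (Q := ↥(H.map π))
      ((ι.comp (H.comap ι).subtype).codRestrict H (fun x => x.2))
      ((π.comp H.subtype).codRestrict (H.map π) (fun x => ⟨x, x.2, rfl⟩)) ?_ ?_ ?_ hFP₁ hFP₃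
    · intro x y hxy
      apply Subtype.ext
      apply hι
      exact congrArg Subtype.val hxy
    · rintro ⟨q, h, hh, rfl⟩
      exact ⟨⟨h, hh⟩, rfl⟩
    · ext ⟨h, hh⟩
      simp only [MonoidHom.mem_ker, MonoidHom.mem_range]
      constructor
      · intro h1
        have h2 : π h = 1 := congrArg Subtype.val h1
        have h3 : h ∈ ι.range := by rw [← hexact]; exact h2
        obtain ⟨a, ha⟩ := h3
        refine ⟨⟨a, by rw [Subgroup.mem_comap, ha]; exact hh⟩, ?_⟩
        exact Subtype.ext ha
      · rintro ⟨⟨a, haH⟩, h4⟩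
        apply Subtype.ext
        have h5 : ι a = h := congrArg Subtype.val h4
        show π h = 1
        have h6 : ι a ∈ π.ker := by rw [hexact]; exact ⟨a, rfl⟩
        rw [← h5]
        exact h6
end

section
/- Let Γ = (V,E) be a finite simplicial graph with a vertex labeling φ assigning to each vertex a non-trivial finitely generated abelian group such that #φ(v) ≥ 3 for every v ∈ V. Then the graph product G(Γ) is slender if and only if Γ is a complete graph. -/
open Monoid Subgroup

section SlenderBasic

variable {G T : Type*} [Group G] [Group T]

/-- Slenderness passes to subgroups contained in the range of a hom from a slender group. -/
lemma slender_sub_range (hs : ∀ H : Subgroup G, H.FG) (f : G →* T) (K : Subgroup T)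
    (hK : K ≤ f.range) : K.FG := by
  have h1 := hs (K.comap f)
  have h2 : (K.comap f).map f = K := Subgroup.map_comap_eq_self hK
  rw [← h2]
  -- map of fg is fg
  classical
  obtain ⟨S, hS⟩ := h1
  exact ⟨S.image f, by rw [Finset.coe_image, ← MonoidHom.map_closure, hS]⟩

lemma fg_map_iff_of_injective {f : G →* T} (hf : Function.Injective f) (H : Subgroup G) :
    (H.map f).FG ↔ H.FG := by
  rw [← Group.fg_iff_subgroup_fg, ← Group.fg_iff_subgroup_fg]
  constructor
  · intro h
    have e := (H.equivMapOfInjective f hf).symm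
    exact Group.fg_of_surjective (f := e.toMonoidHom) e.surjective
  · intro h
    have e := H.equivMapOfInjective f hf
    exact Group.fg_of_surjective (f := e.toMonoidHom) e.surjective

lemma fg_map {f : G →* T} (H : Subgroup G) (h : H.FG) : (H.map f).FG := by
  classical
  obtain ⟨S, hS⟩ := h
  exact ⟨S.image f, by rw [Finset.coe_image, ← MonoidHom.map_closure, hS]⟩

/-- A finitely generated group in which every pair of elements commutes is slender. -/
lemma slender_of_fg_of_comm (hfg : Group.FG G) (hcomm : ∀ x y : G, x * y = y * x) :
    ∀ H : Subgroup G, H.FG := by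
  intro H
  letI : CommGroup G := { (inferInstance : Group G) with mul_comm := hcomm }
  haveI : Group.FG G := hfg
  haveI : AddGroup.FG (Additive G) := AddGroup.fg_of_group_fg
  haveI : Module.Finite ℤ (Additive G) := Module.Finite.iff_addGroup_fg.2 ‹_›
  haveI : IsNoetherian ℤ (Additive G) := inferInstance
  rw [Subgroup.fg_iff_add_fg]
  have hnoeth := IsNoetherian.noetherian (AddSubgroup.toIntSubmodule
    (Subgroup.toAddSubgroup H))
  exact (Submodule.fg_iff_addSubgroup_fg _).1 hnoeth

end SlenderBasic


open Monoid Subgroup Multiplicative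

namespace LampAux

/-- The base group of the lamplighter. -/
abbrev Base : Type := Multiplicative (ℤ →₀ ZMod 2)

/-- The shift action of `ℤ` on the base. -/
noncomputable def shiftHom : Multiplicative ℤ →* MulAut Base :=
  MonoidHom.mk'
    (fun z => AddEquiv.toMultiplicative
      (Finsupp.domCongr (M := ZMod 2) (Equiv.addRight z.toAdd)))
    (by
      intro a b
      apply MulEquiv.ext
      intro x
      rw [MulAut.mul_apply]
      apply Multiplicative.toAdd.injective
      simp only [AddEquiv.toMultiplicative, Finsupp.domCongr, Equiv.coe_fn_mk,
        MulEquiv.coe_mk, Equiv.coe_fn_symm_mk, toAdd_ofAdd, AddMonoidHom.toMultiplicative,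
        AddEquiv.coe_mk, AddMonoidHom.coe_mk, ZeroHom.coe_mk, AddEquiv.toAddMonoidHom_eq_coe,
        AddMonoidHom.coe_coe, MonoidHom.coe_mk, OneHom.coe_mk]
      ext n
      simp only [Finsupp.equivMapDomain_apply, toAdd_mul, Equiv.Perm.mul_def,
        Equiv.symm_trans_apply, Equiv.addRight_symm, Equiv.coe_addRight]
      ring_nf)

/-- The lamplighter group `ℤ/2 ≀ ℤ`. -/
abbrev Lamp : Type := SemidirectProduct Base (Multiplicative ℤ) shiftHom

open SemidirectProduct

noncomputable def tL : Lamp := inr (ofAdd (1 : ℤ))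

noncomputable def aL : Lamp := inl (ofAdd (Finsupp.single (0 : ℤ) (1 : ZMod 2)))

lemma shift_apply (n : ℤ) (f : ℤ →₀ ZMod 2) (m : ℤ) :
    ((shiftHom (ofAdd n) (ofAdd f)).toAdd) m = f (m - n) := by
  simp [shiftHom, AddEquiv.toMultiplicative, Finsupp.domCongr, Finsupp.equivMapDomain_apply,
    sub_eq_add_neg]

lemma conj_aL (n : ℤ) : tL ^ n * aL * tL ^ (-n) = inl (ofAdd (Finsupp.single n (1 : ZMod 2))) := by
  have h1 : tL ^ n = inr (ofAdd n) := by
    rw [tL, ← map_zpow]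
    congr 1
    rw [← ofAdd_zsmul]
    norm_num
  have h2 : tL ^ (-n) = (tL ^ n)⁻¹ := by rw [zpow_neg]
  rw [h2, h1, aL]
  rw [show ((inr (ofAdd n) : Lamp))⁻¹ = inr (ofAdd n)⁻¹ from (map_inv _ _).symm]
  rw [← SemidirectProduct.inl_aut]
  congr 1
  have : shiftHom (ofAdd n) (ofAdd (Finsupp.single (0:ℤ) (1 : ZMod 2)))
      = ofAdd (Finsupp.single n (1 : ZMod 2)) := by
    apply_fun Multiplicative.toAdd
    ext m
    rw [shift_apply]
    simp only [toAdd_ofAdd]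
    rw [Finsupp.single_apply, Finsupp.single_apply]
    exact if_congr ⟨fun h => by omega, fun h => by omega⟩ rfl rfl
  exact this

/-- Key: a subgroup of the lamplighter contained in the base and containing all the
lamps is not finitely generated. -/
lemma not_fg_of_lamps (N : Subgroup Lamp)
    (hmem : ∀ n : ℤ, inl (ofAdd (Finsupp.single n (1 : ZMod 2))) ∈ N)
    (hker : N ≤ SemidirectProduct.rightHom.ker) : ¬ N.FG := by
  rintro ⟨S, hS⟩
  classical
  set s : Finset ℤ := S.sup (fun g => (g.left.toAdd).support) with hs
  -- the subgroup of elements of the kernel with support in `s`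
  set W : Subgroup Lamp :=
    { carrier := {g | SemidirectProduct.rightHom g = 1 ∧ (g.left.toAdd).support ⊆ s}
      one_mem' := by simp
      mul_mem' := by
        rintro x y ⟨hx1, hx2⟩ ⟨hy1, hy2⟩
        refine ⟨by simp [map_mul, hx1, hy1], ?_⟩
        have hxr : x.right = 1 := by
          rw [← SemidirectProduct.rightHom_eq_right]; exact hx1
        rw [SemidirectProduct.mul_left, hxr, map_one, MulAut.one_apply, toAdd_mul]
        exact (Finsupp.support_add).trans (Finset.union_subset hx2 hy2)
      inv_mem' := by
        rintro x ⟨hx1, hx2⟩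
        have hxr : x.right = 1 := by
          rw [← SemidirectProduct.rightHom_eq_right]; exact hx1
        refine ⟨by rw [map_inv, hx1, inv_one], ?_⟩
        rw [SemidirectProduct.inv_left, hxr, inv_one, map_one, MulAut.one_apply, toAdd_inv]
        rw [Finsupp.support_neg]
        exact hx2 } with hW
  have hNW : N ≤ W := by
    rw [← hS]
    apply Subgroup.closure_le W |>.mpr
    intro g hg
    have hgN : g ∈ N := hS ▸ Subgroup.subset_closure hg
    refine ⟨hker hgN, ?_⟩
    exact Finset.le_sup (f := fun g : Lamp => (g.left.toAdd).support) hg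
  obtain ⟨m, hm⟩ := Finset.exists_notMem s
  have h := hNW (hmem m)
  have h2 := h.2
  rw [SemidirectProduct.left_inl, toAdd_ofAdd] at h2
  apply hm
  apply h2
  rw [Finsupp.mem_support_iff, Finsupp.single_apply, if_pos rfl]
  decide

end LampAux


open Monoid Subgroup Monoid.CoprodI Monoid.CoprodI.Word

namespace PingAux

variable {ι : Type*} [DecidableEq ι] {M : ι → Type*} [∀ i, Group (M i)]
  [∀ i, DecidableEq (M i)]

lemma smul_eq_cons {i : ι} (m : M i) (hm : m ≠ 1) (w : Word M) (hw : w.fstIdx ≠ some i) :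
    of m • w = cons m w hw hm :=
  (cons_eq_smul).symm

lemma smul_smul_same {i : ι} (m m' : M i) (w : Word M) :
    of m • (of m' • w) = of (m * m') • w := by
  rw [← mul_smul, ← MonoidHom.map_mul]

/-- Core computation: multiplying by `a⁻¹ b⁻¹` (with `a : M i`, `b : M j`, `i ≠ j`) a word
not starting with `b, a, …` yields a word not starting in the `j` component. -/
lemma core {i j : ι} (hij : i ≠ j) {a : M i} {b : M j} (ha : a ≠ 1) (hb : b ≠ 1)
    (w : Word M) (hw : w.toList.take 2 ≠ [⟨j, b⟩, ⟨i, a⟩]) :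
    (of a⁻¹ • (of b⁻¹ • w)).fstIdx ≠ some j := by
  induction w using consRecOn with
  | empty =>
    rw [smul_eq_cons b⁻¹ (inv_ne_one.2 hb) empty (by simp [fstIdx])]
    rw [smul_eq_cons a⁻¹ (inv_ne_one.2 ha) _ (by simp [fstIdx_cons, hij]; exact fun h => (hij h.symm).elim)]
    simp [fstIdx_cons]
    exact fun h => hij h
  | cons k m w' h1 h2 _ =>
    by_cases hkj : k = j
    · subst hkj
      by_cases hmb : m = b
      · subst hmb
        -- full cancellation of b⁻¹ with b
        rw [cons_eq_smul, smul_smul_same, inv_mul_cancel, MonoidHom.map_one, one_smul]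
        -- now `of a⁻¹ • w'` with `w'.fstIdx ≠ some j` (this is h1)
        induction w' using consRecOn with
        | empty =>
          rw [smul_eq_cons a⁻¹ (inv_ne_one.2 ha) empty (by simp [fstIdx])]
          simp only [fstIdx_cons, ne_eq, Option.some.injEq]
          exact fun h => hij h
        | cons k' m' w'' h1' h2' _ =>
          by_cases hk'i : k' = i
          · subst hk'i
            have hm'a : m' ≠ a := by
              intro h
              subst h
              exact hw rfl
            have ham' : a⁻¹ * m' ≠ 1 := by
              intro h
              exact hm'a ((inv_mul_eq_one.1 h).symm)
            rw [cons_eq_smul, smul_smul_same,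
              smul_eq_cons (a⁻¹ * m') ham' w'' h1']
            simp only [fstIdx_cons, ne_eq, Option.some.injEq]
            exact fun h => hij h
          · rw [smul_eq_cons a⁻¹ (inv_ne_one.2 ha) (cons m' w'' h1' h2') (by
                rw [fstIdx_cons]
                simp only [ne_eq, Option.some.injEq]
                exact fun h => hk'i h)]
            simp only [fstIdx_cons, ne_eq, Option.some.injEq]
            exact fun h => hij h
      · -- merge b⁻¹ * m ≠ 1
        rw [cons_eq_smul, smul_smul_same]
        have hbm : b⁻¹ * m ≠ 1 := by
          intro h
          exact hmb ((inv_mul_eq_one.1 h).symm)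
        rw [smul_eq_cons (b⁻¹ * m) hbm w' h1]
        rw [smul_eq_cons a⁻¹ (inv_ne_one.2 ha) _ (by
          rw [fstIdx_cons]
          simp only [ne_eq, Option.some.injEq]
          exact fun h => hij (h.symm ▸ rfl))]
        simp [fstIdx_cons]
        exact fun h => hij h
    · -- first letter not in the j component
      rw [smul_eq_cons b⁻¹ (inv_ne_one.2 hb) _ (by
        rw [fstIdx_cons]
        simp only [ne_eq, Option.some.injEq]
        exact fun h => hkj h)]
      rw [smul_eq_cons a⁻¹ (inv_ne_one.2 ha) _ (by
        rw [fstIdx_cons]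
        simp only [ne_eq, Option.some.injEq]
        exact fun h => hij (h.symm ▸ rfl))]
      simp [fstIdx_cons]
      exact fun h => hij h

/-- The key ping-pong step. -/
lemma key {i j : ι} (hij : i ≠ j) {a : M i} {b : M j} (ha : a ≠ 1) (hb : b ≠ 1)
    (w : Word M) (hw : w.toList.take 2 ≠ [⟨j, b⟩, ⟨i, a⟩]) :
    ((of a * of b * (of a)⁻¹ * (of b)⁻¹) • w).toList.take 2 = [⟨i, a⟩, ⟨j, b⟩] := by
  have hcore := core hij ha hb w hw
  have hexp : (of a * of b * (of a)⁻¹ * (of b)⁻¹) • w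
      = of a • (of b • (of a⁻¹ • (of b⁻¹ • w))) := by
    rw [← MonoidHom.map_inv, ← MonoidHom.map_inv]
    simp only [mul_smul]
  rw [hexp]
  rw [smul_eq_cons b hb _ hcore]
  rw [smul_eq_cons a ha _ (by
    rw [fstIdx_cons]
    simp only [ne_eq, Option.some.injEq]
    exact fun h => hij (h.symm ▸ rfl))]
  rfl



namespace BoolCase

variable {M : Bool → Type} [∀ i, Group (M i)]

open scoped Pointwise

lemma free_pair {a₁ a₂ : M true} {b : M false} (ha₁ : a₁ ≠ 1) (ha₂ : a₂ ≠ 1)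
    (hne : a₁ ≠ a₂) (hb : b ≠ 1) :
    Function.Injective (FreeGroup.lift (fun c : Bool =>
      (of (cond c a₁ a₂) * of b * (of (cond c a₁ a₂))⁻¹ * (of b)⁻¹ : CoprodI M))) := by
  letI : ∀ i, DecidableEq (M i) := fun i => Classical.decEq (M i)
  set A : Bool → M true := fun c => cond c a₁ a₂ with hA
  have hAne : ∀ c, A c ≠ 1 := by rintro (_|_) <;> simpa [hA]
  have hAinj : ∀ c c', A c = A c' → c = c' := by
    rintro (_|_) (_|_) h
    · rfl
    · exact absurd h.symm hne
    · exact absurd h hne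
    · rfl
  set X : Bool → Set (Word M) := fun c => {w | w.toList.take 2 = [⟨true, A c⟩, ⟨false, b⟩]}
    with hX
  set Y : Bool → Set (Word M) := fun c => {w | w.toList.take 2 = [⟨false, b⟩, ⟨true, A c⟩]}
    with hY
  refine FreeGroup.injective_lift_of_ping_pong (α := Word M) (fun c : Bool =>
    (of (cond c a₁ a₂) * of b * (of (cond c a₁ a₂))⁻¹ * (of b)⁻¹ : CoprodI M)) X Y
    ?_ ?_ ?_ ?_ ?_ ?_
  · -- nonempty
    intro c
    refine ⟨cons (A c) (cons b empty (by simp [Word.empty, fstIdx]) hb)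
      (by simp [cons, fstIdx]) (hAne c), ?_⟩
    simp [hX, cons]
  · -- X disjoint
    intro c c' hcc
    rw [Function.onFun, Set.disjoint_left]
    intro w hw hw'
    have h := (Set.mem_setOf_eq ▸ hw).symm.trans (Set.mem_setOf_eq ▸ hw')
    simp only [List.cons.injEq, Sigma.mk.inj_iff, heq_eq_eq, true_and, and_true] at h
    exact hcc (hAinj _ _ h)
  · -- Y disjoint
    intro c c' hcc
    rw [Function.onFun, Set.disjoint_left]
    intro w hw hw'
    have h := (Set.mem_setOf_eq ▸ hw).symm.trans (Set.mem_setOf_eq ▸ hw')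
    simp only [List.cons.injEq, Sigma.mk.inj_iff, heq_eq_eq, true_and, and_true] at h
    exact hcc (hAinj _ _ h)
  · -- X Y disjoint
    intro c c'
    rw [Set.disjoint_left]
    intro w hw hw'
    have h := (Set.mem_setOf_eq ▸ hw).symm.trans (Set.mem_setOf_eq ▸ hw')
    simp only [List.cons.injEq, Sigma.mk.inj_iff] at h
    exact Bool.noConfusion h.1.1
  · -- ping
    intro c u hu
    obtain ⟨w, hw, rfl⟩ := hu
    exact key (by decide : (true : Bool) ≠ false) (hAne c) hb w hw
  · -- pong
    intro c u hu
    obtain ⟨w, hw, rfl⟩ := hu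
    have hzinv : (of (cond c a₁ a₂) * of b * (of (cond c a₁ a₂))⁻¹ * (of b)⁻¹ : CoprodI M)⁻¹
        = of b * of (A c) * (of b)⁻¹ * (of (A c))⁻¹ := by
      rw [hA]
      group
    rw [Pi.inv_apply, hzinv]
    exact key (by decide : (false : Bool) ≠ true) hb (hAne c) w hw

end BoolCase

end PingAux

open Monoid Subgroup Multiplicative Monoid.CoprodI Monoid.CoprodI.Word
open scoped commutatorElement

open scoped commutatorElement in
def GraphProduct {V : Type*} (Γ : SimpleGraph V) (φ : V → Type*) [∀ v, Group (φ v)] : Type _ :=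
  Monoid.CoprodI φ ⧸ Subgroup.normalClosure
    {x | ∃ (v w : V) (_ : Γ.Adj v w) (a : φ v) (b : φ w),
      x = ⁅Monoid.CoprodI.of a, Monoid.CoprodI.of b⁆}

instance {V : Type*} (Γ : SimpleGraph V) (φ : V → Type*) [∀ v, Group (φ v)] :
    Group (GraphProduct Γ φ) :=
  QuotientGroup.Quotient.group _

def SimpleGraph.NoInducedCycleGT3 {V : Type*} (Γ : SimpleGraph V) : Prop :=
  ∀ n : ℕ, 4 ≤ n → IsEmpty (SimpleGraph.cycleGraph n ↪g Γ)

/-- Let `Γ` be a finite simplicial graph with each vertex labeled by a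
non-trivial finitely generated abelian group of cardinality at least `3`.  Then the graph
product `G(Γ)` is slender if and only if `Γ` is a complete graph. -/
theorem graphProduct_slender_iff_complete
    {V : Type} [Fintype V] (Γ : SimpleGraph V)
    (φ : V → Type) [∀ v, CommGroup (φ v)] [∀ v, Nontrivial (φ v)]
    (hfg : ∀ v, Group.FG (φ v))
    (hcard : ∀ v, 3 ≤ Cardinal.mk (φ v)) :
    Group.Slender (GraphProduct Γ φ) ↔ ∀ v w : V, v ≠ w → Γ.Adj v w := by
  classical
  set R : Set (Monoid.CoprodI φ) :=
    {x | ∃ (v w : V) (_ : Γ.Adj v w) (a : φ v) (b : φ w),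
      x = ⁅Monoid.CoprodI.of a, Monoid.CoprodI.of b⁆} with hR
  set N : Subgroup (Monoid.CoprodI φ) := Subgroup.normalClosure R with hN
  constructor
  · -- slender → complete
    intro hs
    by_contra hnc
    push_neg at hnc
    obtain ⟨v, w, hvw, hnadj⟩ := hnc
    -- the two-vertex free product target
    set M : Bool → Type := fun c => φ (cond c v w) with hM
    letI instM : ∀ c, Group (M c) := fun c => inferInstanceAs (Group (φ (cond c v w)))
    -- elements
    obtain ⟨a₁, ha₁1, -⟩ := Cardinal.three_le (hcard v) (1 : φ v) 1
    obtain ⟨a₂, ha₂a₁, ha₂1⟩ := Cardinal.three_le (hcard v) a₁ 1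
    obtain ⟨b, hb1⟩ := exists_ne (1 : φ w)
    -- the retraction-like homomorphism
    set fi : ∀ u, φ u →* Monoid.CoprodI M := fun u =>
      if h : v = u then h ▸ (Monoid.CoprodI.of (M := M) (i := true))
      else if h' : w = u then h' ▸ (Monoid.CoprodI.of (M := M) (i := false))
      else 1 with hfi
    have hfiv : fi v = Monoid.CoprodI.of (M := M) (i := true) := by simp [hfi]
    have hfiw : fi w = Monoid.CoprodI.of (M := M) (i := false) := by simp [hfi, hvw]
    have hfi1 : ∀ u, v ≠ u → w ≠ u → fi u = 1 := by
      intro u h1 h2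
      simp [hfi, h1, h2]
    set π : Monoid.CoprodI φ →* Monoid.CoprodI M := Monoid.CoprodI.lift fi with hπ
    have hker : N ≤ π.ker := by
      apply Subgroup.normalClosure_le_normal
      rintro x ⟨p, q, hadj, aa, bb, rfl⟩
      rw [SetLike.mem_coe, MonoidHom.mem_ker, map_commutatorElement,
        Monoid.CoprodI.lift_of, Monoid.CoprodI.lift_of]
      rw [commutatorElement_eq_one_iff_commute]
      by_cases hpv : v = p
      · subst hpv
        have hq1 : v ≠ q := fun h => Γ.irrefl (h ▸ hadj)
        have hq2 : w ≠ q := by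
          intro h
          exact hnadj (h ▸ hadj)
        rw [hfi1 q hq1 hq2]
        exact Commute.one_right _
      · by_cases hpw : w = p
        · subst hpw
          have hq1 : w ≠ q := fun h => Γ.irrefl (h ▸ hadj)
          have hq2 : v ≠ q := by
            intro h
            exact hnadj ((h ▸ hadj).symm)
          rw [hfi1 q hq2 hq1]
          exact Commute.one_right _
        · rw [hfi1 p hpv hpw]
          exact Commute.one_left _
    set π' : GraphProduct Γ φ →* Monoid.CoprodI M :=
      QuotientGroup.lift N π hker with hπ'
    have hmk : ∀ x : Monoid.CoprodI φ,
        π' (QuotientGroup.mk x : Monoid.CoprodI φ ⧸ N) = π x := fun x => rfl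
    have hrangev : ∀ a : φ v, (Monoid.CoprodI.of (M := M) (i := true) a) ∈ π'.range := by
      intro a
      exact ⟨(QuotientGroup.mk (Monoid.CoprodI.of a) : Monoid.CoprodI φ ⧸ N), by
        rw [hmk, hπ, Monoid.CoprodI.lift_of, hfiv]⟩
    have hrangew : ∀ c : φ w, (Monoid.CoprodI.of (M := M) (i := false) c) ∈ π'.range := by
      intro c
      exact ⟨(QuotientGroup.mk (Monoid.CoprodI.of c) : Monoid.CoprodI φ ⧸ N), by
        rw [hmk, hπ, Monoid.CoprodI.lift_of, hfiw]⟩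
    -- the free subgroup
    set z : Bool → Monoid.CoprodI M := fun c =>
      Monoid.CoprodI.of (M := M) (i := true) (cond c a₁ a₂) *
        Monoid.CoprodI.of (M := M) (i := false) b *
        (Monoid.CoprodI.of (M := M) (i := true) (cond c a₁ a₂))⁻¹ *
        (Monoid.CoprodI.of (M := M) (i := false) b)⁻¹ with hzdef
    have hinj : Function.Injective (FreeGroup.lift z) :=
      PingAux.BoolCase.free_pair (M := M) ha₁1 ha₂1 (fun h => ha₂a₁ h.symm) hb1
    have hzrange : ∀ c, z c ∈ π'.range := by
      intro c
      apply mul_mem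
      apply mul_mem
      apply mul_mem
      · exact hrangev _
      · exact hrangew _
      · exact inv_mem (hrangev _)
      · exact inv_mem (hrangew _)
    -- the lamplighter quotient of the free group
    set ψ : FreeGroup Bool →* LampAux.Lamp :=
      FreeGroup.lift (fun c => cond c LampAux.tL LampAux.aL) with hψ
    set K : Subgroup (FreeGroup Bool) :=
      Subgroup.comap ψ (SemidirectProduct.rightHom.ker) with hK
    have hψof : ∀ n : ℤ,
        ψ ((FreeGroup.of true) ^ n * FreeGroup.of false * (FreeGroup.of true) ^ (-n))
          = SemidirectProduct.inl (ofAdd (Finsupp.single n (1 : ZMod 2))) := by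
      intro n
      rw [map_mul, map_mul, map_zpow, map_zpow, FreeGroup.lift_apply_of, FreeGroup.lift_apply_of]
      exact LampAux.conj_aL n
    have hcnK : ∀ n : ℤ,
        (FreeGroup.of true) ^ n * FreeGroup.of false * (FreeGroup.of true) ^ (-n) ∈ K := by
      intro n
      rw [hK, Subgroup.mem_comap, MonoidHom.mem_ker, hψof n,
        SemidirectProduct.rightHom_inl]
    -- now derive the contradiction
    have hN'le : Subgroup.map (FreeGroup.lift z) K ≤ π'.range := by
      intro x hx
      obtain ⟨g, -, rfl⟩ := hx
      have : (FreeGroup.lift z).range ≤ π'.range := by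
        rw [FreeGroup.range_lift_eq_closure]
        apply Subgroup.closure_le _ |>.mpr
        rintro _ ⟨c, rfl⟩
        exact hzrange c
      exact this ⟨g, rfl⟩
    have hN'fg : (Subgroup.map (FreeGroup.lift z) K).FG :=
      slender_sub_range hs π' _ hN'le
    have hKfg : K.FG := (fg_map_iff_of_injective hinj K).1 hN'fg
    have hLfg : (Subgroup.map ψ K).FG := fg_map K hKfg
    apply LampAux.not_fg_of_lamps (Subgroup.map ψ K) _ _ hLfg
    · intro n
      exact ⟨(FreeGroup.of true) ^ n * FreeGroup.of false * (FreeGroup.of true) ^ (-n),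
        hcnK n, hψof n⟩
    · rintro x ⟨g, hg, rfl⟩
      exact hg
  · -- complete → slender
    intro hc
    set Q : Monoid.CoprodI φ →* GraphProduct Γ φ := QuotientGroup.mk' N with hQ
    have hQsurj : Function.Surjective Q := QuotientGroup.mk'_surjective N
    -- finite generation of the free product
    have hfgC : Group.FG (Monoid.CoprodI φ) := by
      rw [Group.fg_iff]
      refine ⟨⋃ v, (Monoid.CoprodI.of : φ v →* _) '' ((hfg v).out.choose : Finset (φ v)), ?_, ?_⟩
      · have hofle : ∀ u : V, ((Monoid.CoprodI.of : φ u →* _)).range ≤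
            Subgroup.closure (⋃ v, (Monoid.CoprodI.of : φ v →* _) ''
              ((hfg v).out.choose : Finset (φ v))) := by
          intro u
          have hgen : Subgroup.closure (((hfg u).out.choose : Finset (φ u)) : Set (φ u)) = ⊤ :=
            (hfg u).out.choose_spec
          rw [MonoidHom.range_eq_map, ← hgen, MonoidHom.map_closure]
          apply Subgroup.closure_mono
          exact Set.subset_iUnion_of_subset u (by rfl)
        rw [eq_top_iff']
        intro x
        induction x using Monoid.CoprodI.induction_on with
        | one => exact one_mem _
        | of u m => exact hofle u ⟨m, rfl⟩
        | mul x y hx hy => exact mul_mem hx hy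
      · apply Set.finite_iUnion
        intro u
        exact Set.Finite.image _ (Finset.finite_toSet _)
    haveI := hfgC
    have hfgG : Group.FG (GraphProduct Γ φ) := Group.fg_of_surjective hQsurj
    -- commutativity
    have hcomm : ∀ x y : GraphProduct Γ φ, x * y = y * x := by
      have hgen : ∀ a b : Monoid.CoprodI φ, Commute (Q a) (Q b) := by
        intro a b
        induction a using Monoid.CoprodI.induction_on with
        | one => exact (map_one Q) ▸ Commute.one_left _
        | mul x y hx hy => exact (map_mul Q x y) ▸ Commute.mul_left hx hy
        | of u m =>
          induction b using Monoid.CoprodI.induction_on with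
          | one => exact (map_one Q) ▸ Commute.one_right _
          | mul x y hx hy => exact (map_mul Q x y) ▸ Commute.mul_right hx hy
          | of u' m' =>
            by_cases huu : u = u'
            · subst huu
              have : Commute (Monoid.CoprodI.of m) (Monoid.CoprodI.of m') := by
                unfold Commute SemiconjBy
                rw [← map_mul, ← map_mul, mul_comm]
              exact this.map Q
            · rw [Commute, SemiconjBy, ← commutatorElement_eq_one_iff_mul_comm,
                ← map_commutatorElement]
              have hmem : ⁅Monoid.CoprodI.of m, Monoid.CoprodI.of m'⁆ ∈ N :=
                Subgroup.subset_normalClosure ⟨u, u', hc u u' huu, m, m', rfl⟩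
              rw [hQ]
              exact (QuotientGroup.eq_one_iff _).2 hmem
      intro x y
      obtain ⟨a, rfl⟩ := hQsurj x
      obtain ⟨b, rfl⟩ := hQsurj y
      exact hgen a b
    exact slender_of_fg_of_comm hfgG hcomm
end

section
/- Let Γ be a finite connected simplicial graph that is not complete. If Γ has no induced cycle of length greater than 3, then there exist proper induced subgraphs Γ₁ and Γ₂ of Γ such that Γ = Γ₁ ∪ Γ₂ and Γ₁ ∩ Γ₂ is a complete graph. -/
open SimpleGraph

variable {V : Type}

/-- The subgraph of `Γ` with edges restricted to the vertex set `s` (on the same vertex type). -/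
def GOn (Γ : SimpleGraph V) (s : Set V) : SimpleGraph V where
  Adj x y := x ∈ s ∧ y ∈ s ∧ Γ.Adj x y
  symm := ⟨fun x y h => ⟨h.2.1, h.1, h.2.2.symm⟩⟩
  loopless := ⟨fun x h => Γ.irrefl h.2.2⟩

lemma gon_reach {Γ : SimpleGraph V} {s : Set V} {u w : V}
    (h : (GOn Γ s).Reachable u w) : u = w ∨ (u ∈ s ∧ w ∈ s) := by
  obtain ⟨p⟩ := h
  induction p with
  | nil => exact Or.inl rfl
  | cons h q ih =>
    refine Or.inr ⟨h.1, ?_⟩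
    rcases ih with rfl | hw
    · exact h.2.1
    · exact hw.2

lemma gon_support {Γ : SimpleGraph V} {s : Set V} {u w : V}
    (q : (GOn Γ s).Walk u w) : ∀ v ∈ q.support, v ∈ s ∨ v = w := by
  induction q with
  | nil => intro v hv; simp only [SimpleGraph.Walk.support_nil, List.mem_singleton] at hv; exact Or.inr hv
  | cons h q ih =>
    intro v hv
    rw [SimpleGraph.Walk.support_cons] at hv
    rcases List.mem_cons.mp hv with rfl | hv
    · exact Or.inl h.1
    · exact ih v hv

lemma gon_support_closed {Γ : SimpleGraph V} {s : Set V} {C : Set V}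
    (hC : ∀ v₁ v₂, v₁ ∈ C → (GOn Γ s).Adj v₁ v₂ → v₂ ∈ C) {u w : V}
    (q : (GOn Γ s).Walk u w) (hu : u ∈ C) : ∀ v ∈ q.support, v ∈ C := by
  induction q with
  | nil => intro v hv; simp only [SimpleGraph.Walk.support_nil, List.mem_singleton] at hv; subst hv; exact hu
  | cons h q ih =>
    intro v hv
    rw [SimpleGraph.Walk.support_cons] at hv
    rcases List.mem_cons.mp hv with rfl | hv
    · exact hu
    · exact ih (hC _ _ hu h) v hv

lemma gon_reach_transfer {Γ : SimpleGraph V} {s s' : Set V} {u w : V}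
    (q : (GOn Γ s).Walk u w) (h : ∀ v ∈ q.support, v ∈ s') :
    (GOn Γ s').Reachable u w := by
  induction q with
  | nil => exact ⟨SimpleGraph.Walk.nil⟩
  | cons hadj q ih =>
    have h1 : (GOn Γ s').Adj _ _ :=
      ⟨h _ (SimpleGraph.Walk.start_mem_support _), h _ (by
        rw [SimpleGraph.Walk.support_cons]; exact List.mem_cons_of_mem _ q.start_mem_support), hadj.2.2⟩
    exact h1.reachable.trans (ih fun x hx => h x (by rw [SimpleGraph.Walk.support_cons]; exact List.mem_cons_of_mem _ hx))

lemma exists_adj_of_ne_reach {H : SimpleGraph V} {u w : V}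
    (h : H.Reachable u w) (hne : u ≠ w) : ∃ z, H.Adj u z := by
  obtain ⟨p⟩ := h
  cases p with
  | nil => exact absurd rfl hne
  | cons h' _ => exact ⟨_, h'⟩

lemma exists_nbr_aux {Γ : SimpleGraph V} {t C : Set V} {z : V}
    (hC : ∀ v₁ v₂, v₁ ∈ C → Γ.Adj v₁ v₂ → v₂ ∈ t → v₂ ≠ z → v₂ ∈ C) :
    ∀ {u : V}, (GOn Γ t).Walk u z → u ∈ C → u ≠ z → ∃ x ∈ C, Γ.Adj x z := by
  suffices H : ∀ (n : ℕ) (u : V) (q : (GOn Γ t).Walk u z), q.length = n →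
      u ∈ C → u ≠ z → ∃ x ∈ C, Γ.Adj x z by
    intro u q hu huz; exact H q.length u q rfl hu huz
  intro n
  induction n with
  | zero =>
    intro u q hq hu huz
    cases q with
    | nil => exact absurd rfl huz
    | cons h q' => simp at hq
  | succ n ih =>
    intro u q hq hu huz
    cases q with
    | nil => exact absurd rfl huz
    | @cons _ v _ h q' =>
      by_cases hvz : v = z
      · subst hvz; exact ⟨u, hu, h.2.2⟩
      · exact ih v q' (by simpa using hq) (hC u v hu h.2.2 h.2.1 hvz) hvz

lemma edist_getVert_le {H : SimpleGraph V} {u v : V} (p : H.Walk u v) :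
    ∀ i : ℕ, H.edist u (p.getVert i) ≤ i := by
  intro i
  induction i with
  | zero => rw [SimpleGraph.Walk.getVert_zero]; simp [SimpleGraph.edist_self]
  | succ i ih =>
    by_cases hi : i < p.length
    · have hadj := p.adj_getVert_succ hi
      have h1 : H.edist (p.getVert i) (p.getVert (i+1)) ≤ 1 := by
        have := SimpleGraph.edist_le (SimpleGraph.Walk.cons hadj SimpleGraph.Walk.nil)
        simpa using this
      calc H.edist u (p.getVert (i+1)) ≤ H.edist u (p.getVert i) + H.edist (p.getVert i) (p.getVert (i+1)) :=
            SimpleGraph.edist_triangle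
        _ ≤ (i : ℕ∞) + 1 := add_le_add ih h1
        _ = ((i+1 : ℕ) : ℕ∞) := by push_cast; ring
    · push_neg at hi
      have h2 : p.getVert (i+1) = p.getVert i := by
        rw [p.getVert_of_length_le hi, p.getVert_of_length_le (le_trans hi (Nat.le_succ i))]
      rw [h2]
      exact le_trans ih (by exact_mod_cast Nat.le_succ i)

lemma getVert_edist_le {H : SimpleGraph V} {u v : V} (p : H.Walk u v) {j : ℕ} (hj : j ≤ p.length) :
    H.edist (p.getVert j) v ≤ (p.length - j : ℕ) := by
  have h1 := edist_getVert_le p.reverse (p.length - j)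
  rw [SimpleGraph.Walk.getVert_reverse] at h1
  have h2 : p.length - (p.length - j) = j := by omega
  rw [h2] at h1
  rwa [SimpleGraph.edist_comm] at h1

lemma shortest_spec {H : SimpleGraph V} {u v : V} (p : H.Walk u v)
    (hp : (p.length : ℕ∞) = H.edist u v) {i j : ℕ} (hij : i < j) (hj : j ≤ p.length) :
    p.getVert i ≠ p.getVert j ∧ (H.Adj (p.getVert i) (p.getVert j) → j = i + 1) := by
  have hi' := edist_getVert_le p i
  have hj' := getVert_edist_le p hj
  constructor
  · intro he
    have h1 : H.edist u v ≤ (i : ℕ∞) + ((p.length - j : ℕ) : ℕ∞) := by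
      calc H.edist u v ≤ H.edist u (p.getVert i) + H.edist (p.getVert i) v := SimpleGraph.edist_triangle
        _ = H.edist u (p.getVert i) + H.edist (p.getVert j) v := by rw [he]
        _ ≤ _ := add_le_add hi' hj'
    rw [← hp] at h1
    have h2 : p.length ≤ i + (p.length - j) := by exact_mod_cast h1
    omega
  · intro hadj
    have hone : H.edist (p.getVert i) (p.getVert j) ≤ 1 := by
      have := SimpleGraph.edist_le (SimpleGraph.Walk.cons hadj SimpleGraph.Walk.nil)
      simpa using this
    have h1 : H.edist u v ≤ (i : ℕ∞) + 1 + ((p.length - j : ℕ) : ℕ∞) := by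
      calc H.edist u v ≤ H.edist u (p.getVert i) + H.edist (p.getVert i) v := SimpleGraph.edist_triangle
        _ ≤ H.edist u (p.getVert i) + (H.edist (p.getVert i) (p.getVert j) + H.edist (p.getVert j) v) := by
            exact add_le_add_right SimpleGraph.edist_triangle _
        _ ≤ (i : ℕ∞) + (1 + ((p.length - j : ℕ) : ℕ∞)) := add_le_add hi' (add_le_add hone hj')
        _ = _ := by ring
    rw [← hp] at h1
    have h2 : p.length ≤ i + 1 + (p.length - j) := by exact_mod_cast h1
    omega

lemma fin_add_one_val {n : ℕ} (i : Fin (n+2)) : ((i + 1 : Fin (n+2)) : ℕ) = (i.val + 1) % (n+2) := by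
  rw [Fin.add_def]
  simp

lemma fin_eq_add_one_iff {n : ℕ} (i j : Fin (n+2)) :
    j = i + 1 ↔ (j.val = i.val + 1 ∨ (i.val = n + 1 ∧ j.val = 0)) := by
  have hi := i.isLt
  have hj := j.isLt
  rw [Fin.ext_iff, fin_add_one_val]
  rcases Nat.lt_or_ge i.val (n+1) with h | h
  · rw [Nat.mod_eq_of_lt (by omega)]
    omega
  · have h2 : (i.val + 1) % (n + 2) = 0 := by
      rw [show i.val + 1 = n + 2 by omega]; exact Nat.mod_self _
    rw [h2]
    omega

set_option maxHeartbeats 1000000 in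
/-- **Dirac.** Let `Γ` be a finite connected simplicial graph that is not
complete.  If `Γ` has no induced cycle of length greater than `3`, then there are proper
induced subgraphs `Γ₁`, `Γ₂` of `Γ` (given by vertex sets `S₁`, `S₂`) with `Γ = Γ₁ ∪ Γ₂`
(every vertex, respectively edge, of `Γ` lies in `Γ₁` or in `Γ₂`) such that `Γ₁ ∩ Γ₂`
(the induced subgraph on `S₁ ∩ S₂`) is a complete graph. -/
theorem exists_clique_cut_decomposition_of_noInducedCycleGT3
    {V : Type} [Fintype V] (Γ : SimpleGraph V)
    (hconn : Γ.Connected)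
    (hnotcomplete : ¬ ∀ v w : V, v ≠ w → Γ.Adj v w)
    (hchordal : Γ.NoInducedCycleGT3) :
    ∃ S₁ S₂ : Set V,
      S₁ ≠ Set.univ ∧ S₂ ≠ Set.univ ∧
      S₁ ∪ S₂ = Set.univ ∧
      (∀ v w : V, Γ.Adj v w → (v ∈ S₁ ∧ w ∈ S₁) ∨ (v ∈ S₂ ∧ w ∈ S₂)) ∧
      (∀ v w : V, v ∈ S₁ ∩ S₂ → w ∈ S₁ ∩ S₂ → v ≠ w → Γ.Adj v w) := by
  classical
  push_neg at hnotcomplete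
  obtain ⟨a, b, hne, hnadj⟩ := hnotcomplete
  set IsSep : Finset V → Prop :=
    fun T => a ∉ T ∧ b ∉ T ∧ ¬ (GOn Γ ((T : Set V))ᶜ).Reachable a b with hIsSep
  have hbase : IsSep (Finset.univ \ {a, b}) := by
    refine ⟨by simp, by simp, ?_⟩
    intro hr
    obtain ⟨z, hz⟩ := exists_adj_of_ne_reach hr hne
    have hz1 : z = a ∨ z = b := by
      have := hz.2.1
      simp only [Set.mem_compl_iff, Finset.coe_sdiff, Finset.coe_univ, Set.mem_diff,
        Finset.coe_insert, Finset.coe_singleton, Set.mem_univ, true_and, not_not,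
        Set.mem_insert_iff, Set.mem_singleton_iff] at this
      exact this
    rcases hz1 with rfl | rfl
    · exact Γ.irrefl hz.2.2
    · exact hnadj hz.2.2
  obtain ⟨S, hSmem, hSmin⟩ := Finset.exists_min_image
    (Finset.univ.filter IsSep) Finset.card ⟨_, Finset.mem_filter.mpr ⟨Finset.mem_univ _, hbase⟩⟩
  rw [Finset.mem_filter] at hSmem
  obtain ⟨haS, hbS, hsep⟩ := hSmem.2
  set A : Set V := {v | (GOn Γ ((S : Set V))ᶜ).Reachable a v} with hA
  set B : Set V := {v | (GOn Γ ((S : Set V))ᶜ).Reachable b v} with hB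
  have haA : a ∈ A := ⟨SimpleGraph.Walk.nil⟩
  have hbB : b ∈ B := ⟨SimpleGraph.Walk.nil⟩
  have hAS : ∀ v ∈ A, v ∉ S := by
    intro v hv hvS
    rcases gon_reach hv with rfl | h
    · exact haS hvS
    · exact h.2 (by simpa using hvS)
  have hBS : ∀ v ∈ B, v ∉ S := by
    intro v hv hvS
    rcases gon_reach hv with rfl | h
    · exact hbS hvS
    · exact h.2 (by simpa using hvS)
  have hAclosed : ∀ v w, v ∈ A → Γ.Adj v w → w ∉ S → w ∈ A := by
    intro v w hv hadj hw
    exact hv.trans (SimpleGraph.Adj.reachable ⟨by simpa using hAS v hv, by simpa using hw, hadj⟩)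
  have hBclosed : ∀ v w, v ∈ B → Γ.Adj v w → w ∉ S → w ∈ B := by
    intro v w hv hadj hw
    exact hv.trans (SimpleGraph.Adj.reachable ⟨by simpa using hBS v hv, by simpa using hw, hadj⟩)
  have hbA : b ∉ A := fun h => hsep h
  have hABdisj : ∀ v, v ∈ A → v ∈ B → False := fun v hva hvb => hsep (hva.trans hvb.symm)
  -- every vertex of S has a neighbour in A and in B
  have step : ∀ s ∈ S, (∃ u ∈ A, Γ.Adj u s) ∧ (∃ u ∈ B, Γ.Adj u s) := by
    intro s hs
    have hlt : (S.erase s).card < S.card := Finset.card_erase_lt_of_mem hs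
    have hreach : (GOn Γ ((S.erase s : Finset V) : Set V)ᶜ).Reachable a b := by
      by_contra h
      have : IsSep (S.erase s) :=
        ⟨fun h' => haS (Finset.mem_of_mem_erase h'),
         fun h' => hbS (Finset.mem_of_mem_erase h'), h⟩
      have := hSmin _ (Finset.mem_filter.mpr ⟨Finset.mem_univ _, this⟩)
      omega
    obtain ⟨p⟩ := hreach
    have hssup : s ∈ p.support := by
      by_contra hs'
      apply hsep
      apply gon_reach_transfer p
      intro v hv
      have hvt := gon_support p v hv
      have hvs : v ≠ s := fun h => hs' (h ▸ hv)
      simp only [Set.mem_compl_iff, Finset.mem_coe] at *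
      rcases hvt with h | rfl
      · intro hvS; exact h (Finset.mem_erase.mpr ⟨hvs, hvS⟩)
      · exact hbS
    have hclosA : ∀ v₁ v₂, v₁ ∈ A → Γ.Adj v₁ v₂ →
        v₂ ∈ (((S.erase s : Finset V) : Set V))ᶜ → v₂ ≠ s → v₂ ∈ A := by
      intro v₁ v₂ h1 h2 h3 h4
      refine hAclosed v₁ v₂ h1 h2 ?_
      intro hv₂S
      exact h3 (Finset.mem_coe.mpr (Finset.mem_erase.mpr ⟨h4, hv₂S⟩))
    have hclosB : ∀ v₁ v₂, v₁ ∈ B → Γ.Adj v₁ v₂ →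
        v₂ ∈ (((S.erase s : Finset V) : Set V))ᶜ → v₂ ≠ s → v₂ ∈ B := by
      intro v₁ v₂ h1 h2 h3 h4
      refine hBclosed v₁ v₂ h1 h2 ?_
      intro hv₂S
      exact h3 (Finset.mem_coe.mpr (Finset.mem_erase.mpr ⟨h4, hv₂S⟩))
    constructor
    · exact exists_nbr_aux hclosA (p.takeUntil s hssup) haA (fun h => haS (h ▸ hs))
    · exact exists_nbr_aux hclosB (p.reverse.takeUntil s (by simpa [SimpleGraph.Walk.support_reverse] using hssup))
        hbB (fun h => hbS (h ▸ hs))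
  refine ⟨A ∪ (S : Set V), Aᶜ, ?_, ?_, ?_, ?_, ?_⟩
  · intro h
    have : b ∈ A ∪ (S : Set V) := h ▸ Set.mem_univ b
    rcases this with h' | h'
    · exact hbA h'
    · exact hbS (by simpa using h')
  · intro h
    have : a ∈ Aᶜ := h ▸ Set.mem_univ a
    exact this haA
  · ext v
    by_cases hv : v ∈ A <;> simp [hv]
  · intro v w hadj
    by_cases hv : v ∈ A
    · left
      refine ⟨Or.inl hv, ?_⟩
      by_cases hw : w ∈ S
      · exact Or.inr (by simpa using hw)
      · exact Or.inl (hAclosed v w hv hadj hw)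
    · by_cases hw : w ∈ A
      · left
        refine ⟨?_, Or.inl hw⟩
        by_contra hv'
        have hvS : v ∉ S := by
          intro h; exact hv' (Or.inr (by simpa using h))
        exact hv' (Or.inl (hAclosed w v hw hadj.symm hvS))
      · exact Or.inr ⟨hv, hw⟩
  · -- the clique condition
    intro x y hx hy hxy
    have hxS : x ∈ S := by
      rcases hx.1 with h | h
      · exact absurd h hx.2
      · simpa using h
    have hyS : y ∈ S := by
      rcases hy.1 with h | h
      · exact absurd h hy.2
      · simpa using h
    by_contra hnadjxy
    obtain ⟨⟨x₁, hx₁A, hx₁adj⟩, ⟨x₂, hx₂B, hx₂adj⟩⟩ := step x hxS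
    obtain ⟨⟨y₁, hy₁A, hy₁adj⟩, ⟨y₂, hy₂B, hy₂adj⟩⟩ := step y hyS
    set sA : Set V := insert x (insert y A) with hsA
    set sB : Set V := insert x (insert y B) with hsB
    have hAsub : A ⊆ sA := fun v hv => Or.inr (Or.inr hv)
    have hBsub : B ⊆ sB := fun v hv => Or.inr (Or.inr hv)
    have hreachA : (GOn Γ sA).Reachable x y := by
      obtain ⟨p⟩ : (GOn Γ ((S : Set V))ᶜ).Reachable x₁ y₁ := hx₁A.symm.trans hy₁A
      have hsub : ∀ v ∈ p.support, v ∈ A :=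
        gon_support_closed (fun v₁ v₂ h1 h2 => h1.trans h2.reachable) p hx₁A
      have h2 : (GOn Γ sA).Reachable x₁ y₁ :=
        gon_reach_transfer p (fun v hv => hAsub (hsub v hv))
      refine (SimpleGraph.Adj.reachable ?_).trans (h2.trans (SimpleGraph.Adj.reachable ?_))
      · exact ⟨Or.inl rfl, hAsub hx₁A, hx₁adj.symm⟩
      · exact ⟨hAsub hy₁A, Or.inr (Or.inl rfl), hy₁adj⟩
    have hreachB : (GOn Γ sB).Reachable x y := by
      obtain ⟨p⟩ : (GOn Γ ((S : Set V))ᶜ).Reachable x₂ y₂ := hx₂B.symm.trans hy₂B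
      have hsub : ∀ v ∈ p.support, v ∈ B :=
        gon_support_closed (fun v₁ v₂ h1 h2 => h1.trans h2.reachable) p hx₂B
      have h2 : (GOn Γ sB).Reachable x₂ y₂ :=
        gon_reach_transfer p (fun v hv => hBsub (hsub v hv))
      refine (SimpleGraph.Adj.reachable ?_).trans (h2.trans (SimpleGraph.Adj.reachable ?_))
      · exact ⟨Or.inl rfl, hBsub hx₂B, hx₂adj.symm⟩
      · exact ⟨hBsub hy₂B, Or.inr (Or.inl rfl), hy₂adj⟩
    obtain ⟨P, hP⟩ := hreachA.exists_walk_length_eq_edist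
    obtain ⟨Q, hQ⟩ := hreachB.exists_walk_length_eq_edist
    set m := P.length with hm
    set k := Q.length with hk
    have hm2 : 2 ≤ m := by
      rcases Nat.lt_or_ge m 2 with h | h
      · interval_cases m
        · exfalso; apply hxy
          have h0 := P.getVert_length
          rw [← hm, P.getVert_zero] at h0
          exact h0
        · exfalso; apply hnadjxy
          have hadj := P.adj_getVert_succ (by omega : 0 < P.length)
          rw [P.getVert_zero] at hadj
          have h1 : P.getVert 1 = y := by
            have := P.getVert_length; rwa [← hm] at this
          rw [h1] at hadj
          exact hadj.2.2
      · exact h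
    have hk2 : 2 ≤ k := by
      rcases Nat.lt_or_ge k 2 with h | h
      · interval_cases k
        · exfalso; apply hxy
          have h0 := Q.getVert_length
          rw [← hk, Q.getVert_zero] at h0
          exact h0
        · exfalso; apply hnadjxy
          have hadj := Q.adj_getVert_succ (by omega : 0 < Q.length)
          rw [Q.getVert_zero] at hadj
          have h1 : Q.getVert 1 = y := by
            have := Q.getVert_length; rwa [← hk] at this
          rw [h1] at hadj
          exact hadj.2.2
      · exact h
    have hPy : P.getVert m = y := P.getVert_length
    have hQy : Q.getVert k = y := Q.getVert_length
    have hPmem : ∀ i, i ≤ m → P.getVert i ∈ sA := by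
      intro i hi
      have hmem : P.getVert i ∈ P.support :=
        SimpleGraph.Walk.mem_support_iff_exists_getVert.mpr ⟨i, rfl, hi⟩
      rcases gon_support P _ hmem with h | h
      · exact h
      · rw [h]; exact Or.inr (Or.inl rfl)
    have hQmem : ∀ i, i ≤ k → Q.getVert i ∈ sB := by
      intro i hi
      have hmem : Q.getVert i ∈ Q.support :=
        SimpleGraph.Walk.mem_support_iff_exists_getVert.mpr ⟨i, rfl, hi⟩
      rcases gon_support Q _ hmem with h | h
      · exact h
      · rw [h]; exact Or.inr (Or.inl rfl)
    have hPinj : ∀ i j, i < j → j ≤ m → P.getVert i ≠ P.getVert j :=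
      fun i j hij hj => (shortest_spec P hP hij hj).1
    have hQinj : ∀ i j, i < j → j ≤ k → Q.getVert i ≠ Q.getVert j :=
      fun i j hij hj => (shortest_spec Q hQ hij hj).1
    have hPchord : ∀ i j, i < j → j ≤ m → Γ.Adj (P.getVert i) (P.getVert j) → j = i + 1 := by
      intro i j hij hj hadj
      exact (shortest_spec P hP hij hj).2 ⟨hPmem i (by omega), hPmem j hj, hadj⟩
    have hQchord : ∀ i j, i < j → j ≤ k → Γ.Adj (Q.getVert i) (Q.getVert j) → j = i + 1 := by
      intro i j hij hj hadj
      exact (shortest_spec Q hQ hij hj).2 ⟨hQmem i (by omega), hQmem j hj, hadj⟩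
    have hPadjΓ : ∀ i, i < m → Γ.Adj (P.getVert i) (P.getVert (i+1)) :=
      fun i h => (P.adj_getVert_succ h).2.2
    have hQadjΓ : ∀ i, i < k → Γ.Adj (Q.getVert i) (Q.getVert (i+1)) :=
      fun i h => (Q.adj_getVert_succ h).2.2
    have hPA : ∀ i, 0 < i → i < m → P.getVert i ∈ A := by
      intro i h0 hmi
      rcases hPmem i (le_of_lt hmi) with h | h | h
      · exfalso
        exact hPinj 0 i h0 (le_of_lt hmi) (by rw [P.getVert_zero, h])
      · exfalso
        exact hPinj i m hmi le_rfl (by rw [hPy, h])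
      · exact h
    have hQB : ∀ i, 0 < i → i < k → Q.getVert i ∈ B := by
      intro i h0 hki
      rcases hQmem i (le_of_lt hki) with h | h | h
      · exfalso
        exact hQinj 0 i h0 (le_of_lt hki) (by rw [Q.getVert_zero, h])
      · exfalso
        exact hQinj i k hki le_rfl (by rw [hQy, h])
      · exact h
    have hABadj : ∀ u ∈ A, ∀ w ∈ B, ¬ Γ.Adj u w := by
      intro u hu w hw hadj
      exact hABdisj w (hAclosed u w hu hadj (hBS w hw)) hw
    set n := m + k with hn
    set g : ℕ → V := fun t => if t ≤ m then P.getVert t else Q.getVert (n - t) with hg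
    have hg0 : g 0 = x := by simp [hg, P.getVert_zero]
    have hgadj : ∀ s t, s < t → t < n → (Γ.Adj (g s) (g t) ↔ (t = s + 1 ∨ (s = 0 ∧ t = n - 1))) := by
      intro s t hst htn
      by_cases ht : t ≤ m
      · have hgs : g s = P.getVert s := if_pos (by omega)
        have hgt : g t = P.getVert t := if_pos ht
        rw [hgs, hgt]
        constructor
        · intro h; exact Or.inl (hPchord s t hst ht h)
        · rintro (rfl | ⟨rfl, rfl⟩)
          · exact hPadjΓ s (by omega)
          · omega
      · push_neg at ht
        have hgt : g t = Q.getVert (n - t) := if_neg (by omega)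
        by_cases hs0 : s = 0
        · subst hs0
          rw [hg0, hgt]
          constructor
          · intro h
            have h' : Γ.Adj (Q.getVert 0) (Q.getVert (n - t)) := by
              rw [Q.getVert_zero]; exact h
            have := hQchord 0 (n - t) (by omega) (by omega) h'
            exact Or.inr ⟨rfl, by omega⟩
          · rintro (h1 | ⟨-, h2⟩)
            · omega
            · have hnt : n - t = 1 := by omega
              have h' := hQadjΓ 0 (by omega)
              rw [Q.getVert_zero] at h'
              rw [hnt]
              simpa using h'
        · by_cases hsm : s ≤ m
          · by_cases hsm' : s = m
            · have hgs : g s = Q.getVert k := by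
                rw [hg]; simp only [hsm', if_pos le_rfl]; rw [hPy]; exact hQy.symm
              rw [hgs, hgt]
              constructor
              · intro h
                have := hQchord (n - t) k (by omega) le_rfl h.symm
                exact Or.inl (by omega)
              · rintro (h1 | ⟨h2, -⟩)
                · have hnt : n - t = k - 1 := by omega
                  rw [hnt]
                  have := hQadjΓ (k - 1) (by omega)
                  have hk1 : k - 1 + 1 = k := by omega
                  rw [hk1] at this
                  exact this.symm
                · omega
            · have hgs : g s = P.getVert s := if_pos hsm
              rw [hgs, hgt]
              constructor
              · intro h
                exact absurd h (hABadj _ (hPA s (by omega) (by omega)) _ (hQB (n - t) (by omega) (by omega)))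
              · rintro (h1 | ⟨h2, -⟩) <;> omega
          · push_neg at hsm
            have hgs : g s = Q.getVert (n - s) := if_neg (by omega)
            rw [hgs, hgt]
            constructor
            · intro h
              have := hQchord (n - t) (n - s) (by omega) (by omega) h.symm
              exact Or.inl (by omega)
            · rintro (h1 | ⟨h2, -⟩)
              · have hnt : n - t + 1 = n - s := by omega
                have := hQadjΓ (n - t) (by omega)
                rw [hnt] at this
                exact this.symm
              · omega
    have hginj : ∀ s t, s < t → t < n → g s ≠ g t := by
      intro s t hst htn
      by_cases ht : t ≤ m
      · have hgs : g s = P.getVert s := if_pos (by omega)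
        have hgt : g t = P.getVert t := if_pos ht
        rw [hgs, hgt]
        exact hPinj s t hst ht
      · push_neg at ht
        have hgt : g t = Q.getVert (n - t) := if_neg (by omega)
        by_cases hs0 : s = 0
        · subst hs0
          rw [hg0, hgt]
          intro hcon
          exact hQinj 0 (n - t) (by omega) (by omega) (by rw [Q.getVert_zero]; exact hcon)
        · by_cases hsm : s ≤ m
          · by_cases hsm' : s = m
            · have hgs : g s = Q.getVert k := by
                rw [hg]; simp only [hsm', if_pos le_rfl]; rw [hPy]; exact hQy.symm
              rw [hgs, hgt]
              exact (hQinj (n - t) k (by omega) le_rfl).symm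
            · have hgs : g s = P.getVert s := if_pos hsm
              rw [hgs, hgt]
              intro h
              exact hABdisj _ (h ▸ hPA s (by omega) (by omega)) (hQB (n - t) (by omega) (by omega))
          · push_neg at hsm
            have hgs : g s = Q.getVert (n - s) := if_neg (by omega)
            rw [hgs, hgt]
            exact (hQinj (n - t) (n - s) (by omega) (by omega)).symm
    obtain ⟨n', hn'⟩ : ∃ n', n = n' + 2 := ⟨n - 2, by omega⟩
    have hadjsym : ∀ (i j : Fin (n' + 2)),
        Γ.Adj (g i.val) (g j.val) ↔
          ((j.val = i.val + 1 ∨ (i.val = n' + 1 ∧ j.val = 0)) ∨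
            (i.val = j.val + 1 ∨ (j.val = n' + 1 ∧ i.val = 0))) := by
      intro i j
      have hi2 := i.isLt
      have hj2 := j.isLt
      rcases Nat.lt_trichotomy i.val j.val with h | h | h
      · rw [hgadj i.val j.val h (by omega)]
        omega
      · have hij : (i : ℕ) = (j : ℕ) := h
        rw [hij]
        have hirr : ¬ Γ.Adj (g j.val) (g j.val) := Γ.irrefl
        constructor
        · intro hcon; exact absurd hcon hirr
        · intro hcon; exfalso; omega
      · rw [Γ.adj_comm, hgadj j.val i.val h (by omega)]
        omega
    have hemb : SimpleGraph.cycleGraph (n' + 2) ↪g Γ := by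
      refine ⟨⟨fun i => g i.val, ?_⟩, ?_⟩
      · intro i j hf
        by_contra hne'
        rcases Nat.lt_trichotomy i.val j.val with h | h | h
        · exact hginj i.val j.val h (by omega) hf
        · exact hne' (Fin.ext h)
        · exact hginj j.val i.val h (by omega) hf.symm
      · intro i j
        change Γ.Adj (g i.val) (g j.val) ↔ _
        rw [SimpleGraph.cycleGraph_adj, hadjsym i j]
        have h1 : i - j = 1 ↔ i = j + 1 := sub_eq_iff_eq_add'
        have h2 : j - i = 1 ↔ j = i + 1 := sub_eq_iff_eq_add'
        rw [h1, h2, fin_eq_add_one_iff, fin_eq_add_one_iff]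
        omega
    exact (hchordal (n' + 2) (by omega)).false hemb
end
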